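/- For a fixed integer n ≥ 2 and the sequence R_ℓ = (2^n + ℓ − n − 1)/(2^n + ℓ − n − 2^ℓ) with ℓ ∈ {0,...,n−1}: if ℓ_1 < ℓ and ℓ_2 < ℓ, then 1/R_ℓ < 1/R_{ℓ_1} + 1/R_{ℓ_2} − 1/R_0. -/

import Mathlib

/-- The rational sequence `R_ℓ = (2^n + ℓ - n - 1)/(2^n + ℓ - n - 2^ℓ)`. -/
def R (n ℓ : ℕ) : ℚ :=
  ((2:ℚ)^n + ℓ - n - 1) / ((2:ℚ)^n + ℓ - n - 2^ℓ)

lemma nat_np2_le (n : ℕ) (hn : 2 ≤ n) : n + 2 ≤ 2 ^ n := by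
  induction n with
  | zero => omega
  | succ m ih =>
    rcases Nat.lt_or_ge m 2 with hm | hm
    · interval_cases m <;> simp_all <;> omega
    · have := ih hm
      have : 2 ^ m ≥ 1 := Nat.one_le_two_pow
      rw [pow_succ]
      omega

lemma nat_key (a b : ℕ) (ha : 1 ≤ a) (hab : a ≤ b) : b * 2 ^ a ≤ a * 2 ^ b := by
  obtain ⟨c, rfl⟩ := Nat.exists_eq_add_of_le hab
  have hc : c + 1 ≤ 2 ^ c := Nat.lt_two_pow_self (n := c)
  have h2a : 1 ≤ 2 ^ a := Nat.one_le_two_pow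
  have h : a + c ≤ a * 2 ^ c := by nlinarith [Nat.mul_le_mul (le_refl a) hc]
  calc (a + c) * 2 ^ a ≤ (a * 2 ^ c) * 2 ^ a := Nat.mul_le_mul_right _ h
    _ = a * 2 ^ (a + c) := by rw [pow_add]; ring

lemma mono_aux (q : ℚ) (hq : 1 ≤ q) (a b : ℕ) (hab : a ≤ b) :
    ((2:ℚ)^a - 1)/(q + a) ≤ ((2:ℚ)^b - 1)/(q + b) := by
  have hda : (0:ℚ) < q + a := by positivity
  have hdb : (0:ℚ) < q + b := by positivity
  rw [div_le_div_iff₀ hda hdb]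
  have hpow : (2:ℚ)^a ≤ 2^b := pow_le_pow_right₀ (by norm_num) hab
  have hcab : (a:ℚ) ≤ b := by exact_mod_cast hab
  rcases Nat.eq_zero_or_pos a with rfl | ha
  · have h1 : (1:ℚ) ≤ 2^b := by simpa using hpow
    simp
    nlinarith
  · have hk : (b:ℚ) * 2^a ≤ a * 2^b := by exact_mod_cast nat_key a b ha hab
    nlinarith

/-- If `ℓ₁ < ℓ` and `ℓ₂ < ℓ` (with `ℓ ≤ n-1`), then
`1/R_ℓ < 1/R_{ℓ₁} + 1/R_{ℓ₂} - 1/R_0`. -/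
theorem one_div_R_lt (n ℓ ℓ₁ ℓ₂ : ℕ) (hn : 2 ≤ n) (hℓ : ℓ ≤ n - 1)
    (h1 : ℓ₁ < ℓ) (h2 : ℓ₂ < ℓ) :
    1 / R n ℓ < 1 / R n ℓ₁ + 1 / R n ℓ₂ - 1 / R n 0 := by
  have hq : (1:ℚ) ≤ 2^n - n - 1 := by
    have := nat_np2_le n hn
    have : ((n:ℚ) + 2) ≤ 2^n := by exact_mod_cast this
    linarith
  set q : ℚ := 2^n - n - 1 with hqdef
  have hone : ∀ ℓ' : ℕ, 1 / R n ℓ' = 1 - ((2:ℚ)^ℓ' - 1)/(q + ℓ') := by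
    intro ℓ'
    have hd : (0:ℚ) < q + ℓ' := by positivity
    have hd' : ((2:ℚ)^n + ℓ' - n - 1) ≠ 0 := by
      intro h; apply ne_of_gt hd; rw [hqdef]; linarith [h]
    rw [R, one_div_div]
    rw [hqdef]
    have hd'' : (2:ℚ)^n - n - 1 + ℓ' ≠ 0 := by rw [hqdef] at hd; exact ne_of_gt hd
    field_simp
    ring
  rw [hone ℓ, hone ℓ₁, hone ℓ₂, hone 0]
  simp only [pow_zero, sub_self, zero_div, sub_zero]
  have hℓ1 : 1 ≤ ℓ := by omega
  obtain ⟨k, rfl⟩ : ∃ k, ℓ = k + 1 := ⟨ℓ - 1, by omega⟩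
  have hm1 : ((2:ℚ)^ℓ₁ - 1)/(q + ℓ₁) ≤ ((2:ℚ)^k - 1)/(q + k) :=
    mono_aux q hq ℓ₁ k (by omega)
  have hm2 : ((2:ℚ)^ℓ₂ - 1)/(q + ℓ₂) ≤ ((2:ℚ)^k - 1)/(q + k) :=
    mono_aux q hq ℓ₂ k (by omega)
  have hstep : ((2:ℚ)^k - 1)/(q + k) + ((2:ℚ)^k - 1)/(q + k)
      < ((2:ℚ)^(k+1) - 1)/(q + (k+1)) := by
    have hda : (0:ℚ) < q + k := by positivity
    have hdb : (0:ℚ) < q + (k+1) := by push_cast; positivity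
    rw [← add_div, div_lt_div_iff₀ hda hdb]
    -- need : (2*(2^k-1)) * (q + k + 1) < (2^(k+1) - 1) * (q + k)
    -- equivalent to q + k + 2 > 2^(k+1), i.e. 2^n + k + 1 > n + 2^(k+1)
    have hnat : n + 2^(k+1) ≤ 2^n := by
      have h1 : k + 2 ≤ n := by omega
      have h2 : 2^(k+1) ≤ 2^(n-1) := Nat.pow_le_pow_right (by norm_num) (by omega)
      have h3 : n ≤ 2^(n-1) := by have := Nat.lt_two_pow_self (n := n-1); omega
      have h4 : 2^(n-1) + 2^(n-1) = 2^n := by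
        rw [← two_mul, ← pow_succ']
        congr 1; omega
      omega
    have hnatq : (n:ℚ) + 2*2^k ≤ 2^n := by
      have := (Nat.cast_le (α := ℚ)).2 hnat
      push_cast [pow_succ] at this
      linarith
    have hk0 : (0:ℚ) ≤ (k:ℚ) := Nat.cast_nonneg k
    rw [pow_succ, hqdef]
    nlinarith [pow_pos (by norm_num : (0:ℚ) < 2) k]
  push_cast at hstep ⊢
  linarith
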